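/- Assume λ = μ⁺ for an uncountable regular μ, C̄ = ⟨C_α : α ∈ S^{μ⁺}_μ⟩ with C_α = {a^ξ_α : ξ < μ} is a club-guessing sequence in the sense that for every club E ⊆ μ⁺ there is α with {ξ < μ : a^{ξ+1}_α ∈ E} stationary in μ, and 𝒜_NS ⊆ [μ]^μ is a nonstationary MAD family of size μ⁺. Then X = X[μ⁺, μ, 𝒜_NS, C̄] is high. -/

import Mathlib

open Set Ordinal Cardinal Topology

noncomputable section

namespace DSoukupPaper

/-- The set `S^λ_μ` of ordinals below `lam` of cofinality `mu`. -/
def Sset (lam : Ordinal.{0}) (mu : Cardinal.{0}) : Set Ordinal := {α | α < lam ∧ α.cof = mu}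

/-- `C` is a club in the ordinal `o`. -/
def IsClubBelow (C : Set Ordinal.{0}) (o : Ordinal.{0}) : Prop :=
  C ⊆ Set.Iio o ∧ (∀ β < o, ∃ γ ∈ C, β ≤ γ) ∧
    (∀ β < o, Order.IsSuccLimit β → (∀ γ < β, ∃ δ ∈ C, γ < δ ∧ δ < β) → β ∈ C)

/-- `A` is nonstationary in the ordinal `o`. -/
def IsNonstationaryBelow (A : Set Ordinal.{0}) (o : Ordinal.{0}) : Prop :=
  ∃ C : Set Ordinal, IsClubBelow C o ∧ ∀ x ∈ A, x ∉ C

/-- `A` is stationary in the ordinal `o`. -/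
def IsStationaryBelow (A : Set Ordinal.{0}) (o : Ordinal.{0}) : Prop :=
  ∀ C : Set Ordinal, IsClubBelow C o → ∃ x ∈ A, x ∈ C

/-- A `T₁` space is linearly D iff every nontrivial monotone open cover admits a
closed discrete big set (Guo–Junnila characterization, taken as definition). -/
def LinearlyDSpace (Y : Type*) [TopologicalSpace Y] : Prop :=
  ∀ 𝒰 : Set (Set Y), (∀ U ∈ 𝒰, IsOpen U) → ⋃₀ 𝒰 = Set.univ →
    IsChain (· ⊆ ·) 𝒰 → (∀ U ∈ 𝒰, U ≠ Set.univ) →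
    ∃ D : Set Y, IsClosed D ∧ DiscreteTopology D ∧ ∀ U ∈ 𝒰, ¬D ⊆ U

/-- The data of the construction `X[λ,μ,𝒜,C̄]`: cardinals `λ > μ = cf(μ)`,
a MAD family `𝒜 = {M^φ : φ < κ} ⊆ [μ]^μ`, and an `S^λ_μ`-club sequence
`C̄ = ⟨C_α : α ∈ S^λ_μ⟩`, given via increasing enumerations `a α : μ → C_α`. -/
structure Setup where
  lam : Cardinal.{0}
  mu : Cardinal.{0}
  kappa : Cardinal.{0}
  mu_reg : mu.IsRegular
  mu_lt_lam : mu < lam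
  /-- the MAD family: `M φ` for `φ < κ` -/
  M : Ordinal.{0} → Set Ordinal.{0}
  M_sub : ∀ φ < kappa.ord, M φ ⊆ Set.Iio mu.ord
  M_card : ∀ φ < kappa.ord, #(M φ) = Cardinal.lift.{1} mu
  M_ad : ∀ φ < kappa.ord, ∀ ψ < kappa.ord, φ ≠ ψ →
    #(↥(M φ ∩ M ψ)) < Cardinal.lift.{1} mu
  M_mad : ∀ N ⊆ Set.Iio mu.ord, #N = Cardinal.lift.{1} mu →
    ∃ φ < kappa.ord, #(↥(N ∩ M φ)) = Cardinal.lift.{1} mu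
  /-- the club sequence: `a α ξ` is the `ξ`-th element of `C_α` -/
  a : Ordinal.{0} → Ordinal.{0} → Ordinal.{0}
  a_mono : ∀ α ∈ Sset lam.ord mu, ∀ ξ < mu.ord, ∀ ζ < ξ, a α ζ < a α ξ
  a_lt : ∀ α ∈ Sset lam.ord mu, ∀ ξ < mu.ord, a α ξ < α
  a_unbounded : ∀ α ∈ Sset lam.ord mu, ∀ β < α, ∃ ξ < mu.ord, β ≤ a α ξ
  a_closed : ∀ α ∈ Sset lam.ord mu, ∀ ξ < mu.ord, Order.IsSuccLimit ξ →
    IsLUB (a α '' Set.Iio ξ) (a α ξ)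

namespace Setup

variable (P : Setup)

/-- `C_α` as a set. -/
def C (α : Ordinal) : Set Ordinal := P.a α '' Set.Iio P.mu.ord

open Classical in
/-- the interval `I^ξ_α`. -/
def I (α ξ : Ordinal) : Set Ordinal :=
  if Order.IsSuccLimit ξ then Set.Icc (P.a α ξ) (P.a α (ξ + 1)) else Set.Ioc (P.a α ξ) (P.a α (ξ + 1))

/-- the underlying set of the space: a subset of `λ × κ`. -/
def Xset : Set (Ordinal × Ordinal) :=
  {p | p.1 < P.lam.ord ∧
    ((p.1 ∈ Sset P.lam.ord P.mu ∧ p.2 < P.kappa.ord) ∨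
      (p.1 ∉ Sset P.lam.ord P.mu ∧ p.2 = 0))}

/-- the column `X_α` (as a set of pairs). -/
def col (α : Ordinal) : Set (Ordinal × Ordinal) := {p ∈ P.Xset | p.1 = α}

/-- basic neighborhood `U((α,φ),η)` for `α ∈ S^λ_μ`. -/
def U1 (α φ η : Ordinal) : Set (Ordinal × Ordinal) :=
  {(α, φ)} ∪ ⋃ γ ∈ (⋃ ξ ∈ {ξ | ξ ∈ P.M φ ∧ η ≤ ξ}, P.I α ξ), P.col γ

/-- basic neighborhood `U(α,β) = ⋃{X_γ : β < γ ≤ α}`. -/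
def U3 (α β : Ordinal) : Set (Ordinal × Ordinal) := ⋃ γ ∈ Set.Ioc β α, P.col γ

/-- the collection of basic open sets. -/
def basics : Set (Set (Ordinal × Ordinal)) :=
  {B | (∃ α ∈ Sset P.lam.ord P.mu, ∃ φ < P.kappa.ord, ∃ η < P.mu.ord, B = P.U1 α φ η) ∨
    (∃ α < P.lam.ord, α.cof < P.mu ∧ B = {(α, 0)}) ∨
    (∃ α < P.lam.ord, P.mu < α.cof ∧ ∃ β < α, B = P.U3 α β)}

/-- the topology of `X[λ,μ,𝒜,C̄]`, generated by the basic open sets. -/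
instance instTopo : TopologicalSpace ↥P.Xset :=
  TopologicalSpace.generateFrom {V | ∃ B ∈ P.basics, V = Subtype.val ⁻¹' B}

/-- the column `X_α` viewed inside the space. -/
def colS (α : Ordinal) : Set ↥P.Xset := {x | (x : Ordinal × Ordinal).1 = α}

/-- the projection `π(F) = {α < λ : F ∩ X_α ≠ ∅}`. -/
def pi (F : Set ↥P.Xset) : Set Ordinal := {α | ∃ x ∈ F, (x : Ordinal × Ordinal).1 = α}

/-- `F` is unbounded iff `π(F)` is unbounded in `λ`. -/
def Unbounded (F : Set ↥P.Xset) : Prop := ∀ β < P.lam.ord, ∃ γ ∈ P.pi F, β < γ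

/-- `F` is high enough iff `|{α < λ : |F_α| = |F|}| ≥ μ`. -/
def HighEnough (F : Set ↥P.Xset) : Prop :=
  Cardinal.lift.{1} P.mu ≤ #({α | #(↥(F ∩ P.colS α)) = #F} : Set Ordinal)

end Setup
end DSoukupPaper


namespace DSoukupPaper

/-- L6: an unbounded subset of `Iio o` has cardinality at least `cof o`. -/
lemma cof_le_mk_of_unbounded {o : Ordinal.{0}} {A : Set Ordinal.{0}} (hA : A ⊆ Set.Iio o)
    (hu : ∀ β < o, ∃ γ ∈ A, β ≤ γ) : Cardinal.lift.{1} o.cof ≤ #A := by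
  classical
  let e := (Ordinal.ToType.mk (o := o))
  let A' : Set o.ToType := {y | (e.symm y).1 ∈ A}
  have hcof : Order.cof o.ToType ≤ #A' := by
    apply Order.cof_le
    intro y
    obtain ⟨γ, hγA, hγ⟩ := hu (e.symm y).1 (e.symm y).2
    refine ⟨e ⟨γ, hA hγA⟩, by simpa [A'] using hγA, ?_⟩
    have : (e.symm y) ≤ ⟨γ, hA hγA⟩ := by exact_mod_cast hγ
    calc y = e (e.symm y) := by simp
    _ ≤ e ⟨γ, hA hγA⟩ := e.monotone this
  have hAA' : Nonempty (↥A' ≃ ↥A) := by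
    refine ⟨⟨fun y => ⟨(e.symm y.1).1, y.2⟩, fun x => ⟨e ⟨x.1, hA x.2⟩, by simp [A']⟩,
      fun y => ?_, fun x => ?_⟩⟩
    · ext; simp
    · simp
  have hmk : Cardinal.lift.{1} #A' = #A := by
    have := Cardinal.lift_mk_eq'.2 hAA'
    rwa [Cardinal.lift_id'] at this
  rw [← hmk, ← Ordinal.cof_toType]
  exact Cardinal.lift_le.2 hcof


lemma isLimit_of_aleph0_lt_cof {o : Ordinal.{0}} (h : ℵ₀ < o.cof) : Order.IsSuccLimit o :=
  Ordinal.aleph0_le_cof.1 h.le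

lemma isClubBelow_Iio {o : Ordinal.{0}} : IsClubBelow (Set.Iio o) o :=
  ⟨subset_rfl, fun β hβ => ⟨β, hβ, le_rfl⟩, fun β hβ _ _ => hβ⟩

/-- L3: intersection of a small family of clubs (with `Iio o`) is club. -/
lemma isClubBelow_iInter {o : Ordinal.{0}} (ho : ℵ₀ < o.cof) {ι : Type}
    (hι : #ι < o.cof) (C : ι → Set Ordinal) (hC : ∀ j, IsClubBelow (C j) o) :
    IsClubBelow (Set.Iio o ∩ ⋂ j, C j) o := by
  classical
  have olim : Order.IsSuccLimit o := isLimit_of_aleph0_lt_cof ho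
  refine ⟨inter_subset_left, ?_, ?_⟩
  · intro β hβ
    -- choice function
    have next : ∀ j : ι, ∀ γ : Ordinal, ∃ δ, δ ∈ Set.Iio o ∧ (Order.succ γ < o → δ ∈ C j ∧ Order.succ γ ≤ δ) := by
      intro j γ
      by_cases h : Order.succ γ < o
      · obtain ⟨δ, hδC, hδ⟩ := (hC j).2.1 _ h
        exact ⟨δ, (hC j).1 hδC, fun _ => ⟨hδC, hδ⟩⟩
      · exact ⟨0, olim.pos, fun h' => absurd h' h⟩
    choose f hf1 hf2 using next
    let seq : ℕ → Ordinal := fun n => Nat.rec β (fun _ s => max (Order.succ s) (⨆ j, f j s)) n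
    have seq_succ : ∀ n, seq (n+1) = max (Order.succ (seq n)) (⨆ j, f j (seq n)) := fun n => rfl
    have seq_lt : ∀ n, seq n < o := by
      intro n
      induction n with
      | zero => exact hβ
      | succ n ih =>
        rw [seq_succ]
        refine max_lt (olim.succ_lt ih) (Ordinal.iSup_lt_ord hι fun j => hf1 j _)
    have seq_mono : ∀ n, seq n < seq (n+1) := by
      intro n
      rw [seq_succ]
      exact lt_of_lt_of_le (Order.lt_succ _) (le_max_left _ _)
    have hsup : (⨆ n, seq n) < o := Ordinal.iSup_lt_ord (by simpa using ho) seq_lt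
    have hle : ∀ n, seq n ≤ ⨆ n, seq n := fun n => Ordinal.le_iSup seq n
    have hlt : ∀ n, seq n < ⨆ n, seq n := fun n => lt_of_lt_of_le (seq_mono n) (hle (n+1))
    have hlim : Order.IsSuccLimit (⨆ n, seq n) := by
      rw [Ordinal.isSuccLimit_iff]; refine ⟨?_, Order.isSuccPrelimit_of_succ_lt ?_⟩
      · intro h0
        exact absurd (h0 ▸ hlt 0) (by simp)
      · intro a ha
        obtain ⟨n, hn⟩ := Ordinal.lt_iSup_iff.1 ha
        calc Order.succ a ≤ Order.succ (seq n) := Order.succ_le_succ hn.le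
        _ ≤ seq (n+1) := by rw [seq_succ]; exact le_max_left _ _
        _ < ⨆ n, seq n := hlt (n+1)
    refine ⟨⨆ n, seq n, ⟨hsup, ?_⟩, (hle 0)⟩
    rw [Set.mem_iInter]
    intro j
    refine (hC j).2.2 _ hsup hlim ?_
    intro γ hγ
    obtain ⟨n, hn⟩ := Ordinal.lt_iSup_iff.1 hγ
    have hsucc : Order.succ (seq n) < o := olim.succ_lt (seq_lt n)
    refine ⟨f j (seq n), (hf2 j (seq n) hsucc).1, hn.trans_le ?_, ?_⟩
    · exact (Order.le_succ _).trans (hf2 j (seq n) hsucc).2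
    · calc f j (seq n) ≤ ⨆ j, f j (seq n) := Ordinal.le_iSup _ j
      _ ≤ seq (n+1) := by rw [seq_succ]; exact le_max_right _ _
      _ < ⨆ n, seq n := hlt (n+1)
  · intro β hβ hβlim happ
    refine ⟨hβ, ?_⟩
    rw [Set.mem_iInter]
    intro j
    refine (hC j).2.2 _ hβ hβlim ?_
    intro γ hγ
    obtain ⟨δ, hδ, h1, h2⟩ := happ γ hγ
    exact ⟨δ, (Set.mem_iInter.1 hδ.2) j, h1, h2⟩

lemma isClubBelow_Ico {o s : Ordinal.{0}} (hs : s < o) : IsClubBelow (Set.Ico s o) o := by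
  refine ⟨fun x hx => hx.2, fun β hβ => ⟨max s β, ⟨le_max_left _ _, max_lt hs hβ⟩, le_max_right _ _⟩, ?_⟩
  intro β hβ hβlim happ
  obtain ⟨δ, hδ, _, h2⟩ := happ 0 hβlim.pos
  exact ⟨hδ.1.trans h2.le, hβ⟩

lemma IsNonstationaryBelow.mono {A B : Set Ordinal.{0}} {o : Ordinal.{0}} (h : IsNonstationaryBelow B o)
    (hAB : A ⊆ B) : IsNonstationaryBelow A o := by
  obtain ⟨C, hC, hC'⟩ := h
  exact ⟨C, hC, fun x hx => hC' x (hAB hx)⟩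

lemma isNonstationaryBelow_of_bounded {A : Set Ordinal.{0}} {o b : Ordinal.{0}} (hb : b < o)
    (holim : Order.IsSuccLimit o) (hA : ∀ x ∈ A, x ≤ b) : IsNonstationaryBelow A o := by
  refine ⟨Set.Ico (Order.succ b) o, isClubBelow_Ico (holim.succ_lt hb), ?_⟩
  intro x hx hxC
  exact absurd (hA x hx) (not_le.2 (Order.succ_le_iff.1 hxC.1))

/-- stationary minus a small union of nonstationary sets is stationary -/
lemma stationary_diff_iUnion {o : Ordinal.{0}} (ho : ℵ₀ < o.cof) {N : Set Ordinal}
    (hN : IsStationaryBelow N o) {ι : Type} (hι : #ι < o.cof) (U : ι → Set Ordinal)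
    (hU : ∀ j, IsNonstationaryBelow (U j) o) :
    IsStationaryBelow (N \ ⋃ j, U j) o := by
  intro C' hC'
  classical
  choose D hD hD' using hU
  have hall : IsClubBelow (Set.Iio o ∩ ⋂ j : Option ι, (Option.rec C' D j : Set Ordinal)) o := by
    refine isClubBelow_iInter ho ?_ _ ?_
    · rw [Cardinal.mk_option]
      exact Cardinal.add_lt_of_lt ho.le hι (Cardinal.one_lt_aleph0.trans ho)
    · rintro (_|j)
      exacts [hC', hD j]
  obtain ⟨x, hxN, hx⟩ := hN _ hall
  rw [Set.mem_inter_iff, Set.mem_iInter] at hx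
  refine ⟨x, ⟨hxN, ?_⟩, hx.2 none⟩
  rw [Set.mem_iUnion]
  rintro ⟨j, hj⟩
  exact hD' j x hj (hx.2 (some j))


/-- the derived-set (set of limit points) of an unbounded set is club -/
lemma isClubBelow_derived {o : Ordinal.{0}} (ho : ℵ₀ < o.cof) {A : Set Ordinal}
    (hsub : A ⊆ Set.Iio o) (hA : ∀ β < o, ∃ γ ∈ A, β < γ) :
    IsClubBelow {β | β < o ∧ 0 < β ∧ ∀ γ < β, ∃ δ ∈ A, γ < δ ∧ δ < β} o := by
  refine ⟨fun x hx => hx.1, ?_, ?_⟩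
  · intro β hβ
    have next : ∀ γ : Ordinal, ∃ δ, δ < o ∧ (γ < o → δ ∈ A ∧ γ < δ) := by
      intro γ
      by_cases h : γ < o
      · obtain ⟨δ, hδA, hδ⟩ := hA γ h
        exact ⟨δ, hsub hδA, fun _ => ⟨hδA, hδ⟩⟩
      · exact ⟨0, (Ordinal.aleph0_le_cof.1 ho.le).pos, fun h' => absurd h' h⟩
    choose f hf1 hf2 using next
    let c : ℕ → Ordinal := fun n => Nat.rec (f β) (fun _ s => f s) n
    have hc0 : c 0 = f β := rfl
    have hcs : ∀ n, c (n+1) = f (c n) := fun n => rfl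
    have hclt : ∀ n, c n < o := by
      intro n; induction n with
      | zero => exact hf1 β
      | succ n ih => rw [hcs]; exact hf1 _
    have hcmono : ∀ n, c n < c (n+1) := fun n => by
      rw [hcs]; exact (hf2 (c n) (hclt n)).2
    have hcA : ∀ n, c n ∈ A := by
      intro n; cases n with
      | zero => exact (hf2 β hβ).1
      | succ n => rw [hcs]; exact (hf2 (c n) (hclt n)).1
    have hsup : (⨆ n, c n) < o := Ordinal.iSup_lt_ord (by simpa using ho) hclt
    have hle : ∀ n, c n ≤ ⨆ n, c n := fun n => Ordinal.le_iSup c n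
    have hlt : ∀ n, c n < ⨆ n, c n := fun n => lt_of_lt_of_le (hcmono n) (hle (n+1))
    refine ⟨⨆ n, c n, ⟨hsup, lt_of_le_of_lt zero_le (hlt 0), ?_⟩,
      ((hf2 β hβ).2.le.trans (hle 0))⟩
    intro γ hγ
    obtain ⟨n, hn⟩ := Ordinal.lt_iSup_iff.1 hγ
    exact ⟨c (n+1), hcA (n+1), hn.trans (hcmono n), hlt (n+1)⟩
  · intro β hβ hβlim happ
    refine ⟨hβ, hβlim.pos, ?_⟩
    intro γ hγ
    obtain ⟨δ', hδ', h1, h2⟩ := happ γ hγ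
    obtain ⟨δ, hδA, h3, h4⟩ := hδ'.2.2 γ h1
    exact ⟨δ, hδA, h3, h4.trans h2⟩

lemma mk_le_of_subset_Iio {o : Ordinal.{0}} {A : Set Ordinal} (h : A ⊆ Set.Iio o) :
    Cardinal.mk A ≤ Cardinal.lift.{1} o.card := by
  rw [← Ordinal.mk_Iio_ordinal]
  exact Cardinal.mk_le_mk_of_subset h


lemma unbounded_of_mk_eq {c : Cardinal.{0}} {A : Set Ordinal}
    (hsub : A ⊆ Set.Iio c.ord) (hcard : Cardinal.lift.{1} c ≤ #A) :
    ∀ b < c.ord, ∃ x ∈ A, b ≤ x := by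
  intro b hb
  by_contra h
  push_neg at h
  have : A ⊆ Set.Iio b := fun x hx => h x hx
  have := (mk_le_of_subset_Iio this).trans_lt (Cardinal.lift_lt.2 (Cardinal.lt_ord.1 hb))
  exact this.not_ge hcard


/-- `α ∈ S^λ_μ` cannot be the `ξ'`-th point of a club `C_{α'}` for limit `ξ' < μ`. -/
lemma not_left_endpoint (P : Setup) {α' ξ' α : Ordinal} (hα' : α' ∈ Sset P.lam.ord P.mu)
    (hα : α ∈ Sset P.lam.ord P.mu) (hξ' : ξ' < P.mu.ord) (hlim : Order.IsSuccLimit ξ')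
    (heq : P.a α' ξ' = α) : False := by
  have hlub : IsLUB (P.a α' '' Set.Iio ξ') α := heq ▸ P.a_closed α' hα' ξ' hξ' hlim
  have hsub : P.a α' '' Set.Iio ξ' ⊆ Set.Iio α := by
    rintro _ ⟨ζ, hζ, rfl⟩
    exact heq ▸ P.a_mono α' hα' ξ' hξ' ζ hζ
  have hu : ∀ β < α, ∃ γ ∈ P.a α' '' Set.Iio ξ', β ≤ γ := by
    intro β hβ
    by_contra h
    push_neg at h
    have hub : β ∈ upperBounds (P.a α' '' Set.Iio ξ') := fun γ hγ => (h γ hγ).le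
    exact absurd (hlub.2 hub) (not_le.2 hβ)
  have h1 : Cardinal.lift.{1} α.cof ≤ #(P.a α' '' Set.Iio ξ') :=
    cof_le_mk_of_unbounded hsub hu
  have h2 : #(P.a α' '' Set.Iio ξ') ≤ Cardinal.lift.{1} ξ'.card := by
    calc #(P.a α' '' Set.Iio ξ') ≤ #(Set.Iio ξ') := Cardinal.mk_image_le
    _ = Cardinal.lift.{1} ξ'.card := Ordinal.mk_Iio_ordinal _
  rw [hα.2] at h1
  have := Cardinal.lift_le.1 (h1.trans h2)
  exact absurd (Cardinal.lt_ord.1 hξ') (not_lt.2 this)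

/-- Main closure lemma: the guessed points are in `F`. -/
lemma guessed_mem (P : Setup) (hunc : Cardinal.aleph0 < P.mu) (hlam : P.lam = Order.succ P.mu)
    (F : Set ↥P.Xset) (hF : IsClosed F)
    {E : Set Ordinal}
    (hE : ∀ β ∈ E, ∀ γ < β, ∃ δ ∈ P.pi F, γ < δ ∧ δ < β)
    {α : Ordinal} (hα : α ∈ Sset P.lam.ord P.mu)
    {φ : Ordinal} (hφ : φ < P.kappa.ord)
    (hMN : ∀ c < P.mu.ord, ∃ ξ, ξ ∈ P.M φ ∧ ξ < P.mu.ord ∧ P.a α (ξ + 1) ∈ E ∧ c ≤ ξ) :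
    (⟨(α, φ), ⟨hα.1, Or.inl ⟨hα, hφ⟩⟩⟩ : ↥P.Xset) ∈ F := by
  classical
  set x : ↥P.Xset := ⟨(α, φ), ⟨hα.1, Or.inl ⟨hα, hφ⟩⟩⟩ with hx
  have holim : Order.IsSuccLimit P.mu.ord := Cardinal.isSuccLimit_ord P.mu_reg.aleph0_le
  have hμpos : (0:Ordinal) < P.mu.ord := holim.pos
  have hαpos : (0:Ordinal) < α := by
    rcases eq_zero_or_pos α with h | h
    · exfalso
      have := hα.2
      rw [h, Ordinal.cof_zero] at this
      exact absurd this.symm (P.mu_reg.aleph0_le.trans_lt' (by simp [Cardinal.aleph0_pos])).ne'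
    · exact h
  have hsucclt : ∀ ξ < P.mu.ord, ξ + 1 < P.mu.ord := by
    intro ξ hξ
    rw [Ordinal.add_one_eq_succ]
    exact holim.succ_lt hξ
  have fact1 : ∀ ξ < P.mu.ord, P.a α ξ < α := P.a_lt α hα
  have fact2 : ∀ ξ < P.mu.ord, P.a α ξ < P.a α (ξ + 1) := by
    intro ξ hξ
    exact P.a_mono α hα (ξ + 1) (hsucclt ξ hξ) ξ (by rw [Ordinal.add_one_eq_succ]; exact Order.lt_succ ξ)
  -- membership in `U1` via a column
  have colmem : ∀ α' φ' η' ξ' γ, ξ' ∈ P.M φ' → η' ≤ ξ' → γ ∈ P.I α' ξ' →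
      ∀ y : ↥P.Xset, (y : Ordinal × Ordinal).1 = γ → (y : Ordinal × Ordinal) ∈ P.U1 α' φ' η' := by
    intro α' φ' η' ξ' γ h1 h2 h3 y hy
    refine Set.mem_union_right _ ?_
    refine Set.mem_biUnion ?_ ⟨y.2, hy⟩
    exact Set.mem_biUnion ⟨h1, h2⟩ h3
  have Ioo_mem_I : ∀ α'' ξ γ, P.a α'' ξ < γ → γ ≤ P.a α'' (ξ + 1) → γ ∈ P.I α'' ξ := by
    intro α'' ξ γ h1 h2
    rw [Setup.I]
    split
    · exact ⟨h1.le, h2⟩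
    · exact ⟨h1, h2⟩
  -- the crucial induction over generated open sets
  have good : ∀ U : Set ↥P.Xset,
      TopologicalSpace.GenerateOpen {V | ∃ B ∈ P.basics, V = Subtype.val ⁻¹' B} U → x ∈ U →
      ∃ η < P.mu.ord, ∃ β < α, ∀ ξ, ξ ∈ P.M φ → η ≤ ξ → ξ < P.mu.ord → β ≤ P.a α ξ →
        ∀ γ, P.a α ξ < γ → γ < P.a α (ξ + 1) → ∀ y : ↥P.Xset,
          (y : Ordinal × Ordinal).1 = γ → y ∈ U := by
    intro U hU
    induction hU with
    | basic V hV =>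
      obtain ⟨B, hB, rfl⟩ := hV
      intro hxB
      have hxB' : ((α, φ) : Ordinal × Ordinal) ∈ B := hxB
      rcases hB with ⟨α', hα', φ', hφ', η', hη', rfl⟩ | ⟨α0, _, hcof0, rfl⟩ | ⟨α0, hα0, hcof0, _⟩
      · rcases hxB' with hsing | hcol
        · -- x is the center of the `U1`
          rw [Set.mem_singleton_iff, Prod.mk.injEq] at hsing
          obtain ⟨h1, h2⟩ := hsing
          refine ⟨η', hη', 0, hαpos, ?_⟩
          intro ξ hξM hξη hξμ _ γ hγ1 hγ2 y hy
          have : γ ∈ P.I α ξ := Ioo_mem_I α ξ γ hγ1 hγ2.le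
          exact colmem α' φ' η' ξ γ (h2 ▸ hξM) hξη (h1 ▸ this) y hy
        · -- x lies in a column of the `U1`
          simp only [Set.mem_iUnion] at hcol
          obtain ⟨γ0, ⟨ξ', ⟨hξ'M, hξ'η⟩, hγ0I⟩, hγ0col⟩ := hcol
          have hγ0 : γ0 = α := hγ0col.2.symm
          rw [hγ0] at hγ0I
          have hξ'μ : ξ' < P.mu.ord := P.M_sub φ' hφ' hξ'M
          have hup : α ≤ P.a α' (ξ' + 1) := by
            rw [Setup.I] at hγ0I
            split at hγ0I
            · exact hγ0I.2
            · exact hγ0I.2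
          have hlo : P.a α' ξ' < α := by
            rw [Setup.I] at hγ0I
            split at hγ0I
            · next hlim =>
              rcases lt_or_eq_of_le hγ0I.1 with h | h
              · exact h
              · exact absurd (not_left_endpoint P hα' hα hξ'μ hlim h) (fun f => f)
            · exact hγ0I.1
          refine ⟨0, hμpos, P.a α' ξ', hlo, ?_⟩
          intro ξ hξM _ hξμ hβ γ hγ1 hγ2 y hy
          have hγI : γ ∈ P.I α' ξ' := by
            rw [Setup.I]
            have l : P.a α' ξ' < γ := lt_of_le_of_lt hβ hγ1
            have r : γ ≤ P.a α' (ξ' + 1) :=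
              le_trans (le_of_lt (lt_trans hγ2 (lt_of_lt_of_le (fact1 (ξ+1) (hsucclt ξ hξμ)) hup)))
                le_rfl
            split
            · exact ⟨l.le, r⟩
            · exact ⟨l, r⟩
          exact colmem α' φ' η' ξ' γ hξ'M hξ'η hγI y hy
      · -- singleton basic set: impossible
        exfalso
        rw [Set.mem_singleton_iff, Prod.mk.injEq] at hxB'
        obtain ⟨h1, _⟩ := hxB'
        rw [← h1] at hcof0
        rw [hα.2] at hcof0
        exact lt_irrefl _ hcof0
      · -- `U3` basic set: impossible since `λ = μ⁺`
        exfalso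
        have h1 : α0.cof ≤ α0.card := Ordinal.cof_le_card α0
        have h2 : α0.card < Order.succ P.mu := by
          rw [← hlam]
          exact Cardinal.lt_ord.1 hα0
        have h3 : α0.card ≤ P.mu := Order.lt_succ_iff.1 h2
        exact absurd (h1.trans h3) (not_le.2 hcof0)
    | univ =>
      intro _
      exact ⟨0, hμpos, 0, hαpos, fun _ _ _ _ _ _ _ _ _ _ => Set.mem_univ _⟩
    | inter U V hU hV ihU ihV =>
      intro hxUV
      obtain ⟨η1, hη1, β1, hβ1, h1⟩ := ihU hxUV.1
      obtain ⟨η2, hη2, β2, hβ2, h2⟩ := ihV hxUV.2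
      refine ⟨max η1 η2, max_lt hη1 hη2, max β1 β2, max_lt hβ1 hβ2, ?_⟩
      intro ξ hξM hξη hξμ hβ γ hγ1 hγ2 y hy
      exact ⟨h1 ξ hξM (le_trans (le_max_left _ _) hξη) hξμ (le_trans (le_max_left _ _) hβ) γ hγ1 hγ2 y hy,
        h2 ξ hξM (le_trans (le_max_right _ _) hξη) hξμ (le_trans (le_max_right _ _) hβ) γ hγ1 hγ2 y hy⟩
    | sUnion S hS ih =>
      intro hxS
      obtain ⟨U, hUS, hxU⟩ := hxS
      obtain ⟨η, hη, β, hβ, h⟩ := ih U hUS hxU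
      exact ⟨η, hη, β, hβ, fun ξ a b c d γ e f y g => ⟨U, hUS, h ξ a b c d γ e f y g⟩⟩
  -- conclude via closedness
  rw [← hF.closure_eq]
  rw [mem_closure_iff]
  intro U hUopen hxU
  have hgen : TopologicalSpace.GenerateOpen {V | ∃ B ∈ P.basics, V = Subtype.val ⁻¹' B} U := hUopen
  obtain ⟨η, hη, β, hβ, h⟩ := good U hgen hxU
  obtain ⟨ξ1, hξ1, hβξ1⟩ := P.a_unbounded α hα β hβ
  obtain ⟨ξ, hξM, hξμ, hξE, hξc⟩ := hMN (max η ξ1) (max_lt hη hξ1)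
  have hηξ : η ≤ ξ := le_trans (le_max_left _ _) hξc
  have hξ1ξ : ξ1 ≤ ξ := le_trans (le_max_right _ _) hξc
  have hβa : β ≤ P.a α ξ := by
    rcases lt_or_eq_of_le hξ1ξ with h' | h'
    · exact hβξ1.trans (P.a_mono α hα ξ hξμ ξ1 h').le
    · exact h' ▸ hβξ1
  obtain ⟨δ, hδpi, hδ1, hδ2⟩ := hE _ hξE (P.a α ξ) (fact2 ξ hξμ)
  obtain ⟨y, hyF, hy1⟩ := hδpi
  exact ⟨y, h ξ hξM hηξ hξμ hβa δ hδ1 hδ2 y hy1, hyF⟩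


lemma claim (P : Setup) (hunc : Cardinal.aleph0 < P.mu) {N : Set Ordinal}
    (hNsub : N ⊆ Set.Iio P.mu.ord)
    (hNst : IsStationaryBelow N P.mu.ord)
    (hNS : ∀ φ < P.kappa.ord, IsNonstationaryBelow (P.M φ) P.mu.ord)
    (hkpos : (0:Ordinal) < P.kappa.ord)
    {Ψ : Set Ordinal} (hΨsub : Ψ ⊆ Set.Iio P.kappa.ord) (hΨ : #Ψ ≤ Cardinal.lift.{1} P.mu) :
    ∃ φ < P.kappa.ord, φ ∉ Ψ ∧ #(↥(N ∩ P.M φ)) = Cardinal.lift.{1} P.mu := by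
  classical
  have hcof : P.mu.ord.cof = P.mu := P.mu_reg.cof_eq
  have hale : ℵ₀ < P.mu.ord.cof := by rw [hcof]; exact hunc
  have holim : Order.IsSuccLimit P.mu.ord := Ordinal.aleph0_le_cof.1 hale.le
  -- the enumeration `f` of `Ψ`
  have hΨle : #Ψ ≤ #(Set.Iio P.mu.ord) := by
    rw [Ordinal.mk_Iio_ordinal, Cardinal.card_ord]; exact hΨ
  obtain ⟨e⟩ : Nonempty (↥Ψ ↪ ↥(Set.Iio P.mu.ord)) := Cardinal.le_def _ _ |>.1 hΨle
  set f : Ordinal → Ordinal := fun j =>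
    if h : ∃ ψ : ↥Ψ, ((e ψ : ↥(Set.Iio P.mu.ord)) : Ordinal) = j then (h.choose : Ordinal)
    else 0 with hf
  have hf_lt : ∀ j, f j < P.kappa.ord := by
    intro j
    by_cases h : ∃ ψ : ↥Ψ, ((e ψ : ↥(Set.Iio P.mu.ord)) : Ordinal) = j
    · simp only [hf, dif_pos h]
      exact hΨsub h.choose.2
    · simp only [hf, dif_neg h]
      exact hkpos
  have hf_cover : ∀ φ ∈ Ψ, ∃ j < P.mu.ord, f j = φ := by
    intro φ hφ
    refine ⟨(e ⟨φ, hφ⟩ : ↥(Set.Iio P.mu.ord)), (e ⟨φ, hφ⟩).2, ?_⟩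
    have hex : ∃ ψ : ↥Ψ, ((e ψ : ↥(Set.Iio P.mu.ord)) : Ordinal) =
        ((e ⟨φ, hφ⟩ : ↥(Set.Iio P.mu.ord)) : Ordinal) := ⟨⟨φ, hφ⟩, rfl⟩
    rw [hf]
    simp only [dif_pos hex]
    have := hex.choose_spec
    have heq : e hex.choose = e ⟨φ, hφ⟩ := Subtype.ext this
    have := e.injective heq
    rw [this]
  -- the recursively-defined sequence `g`
  set g : Ordinal → Ordinal := Ordinal.lt_wf.fix
    (fun i IH => if h : (N \ {x | ∃ j, ∃ hj : j < i, x ∈ P.M (f j) ∨ x = IH j hj}).Nonempty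
      then h.some else 0) with hg
  have geq : ∀ i, g i = if h : (N \ {x | ∃ j, ∃ _ : j < i, x ∈ P.M (f j) ∨ x = g j}).Nonempty
      then h.some else 0 := by
    intro i
    rw [hg]
    exact Ordinal.lt_wf.fix_eq _ i
  have key : ∀ i, i < P.mu.ord → g i ∈ N ∧ ∀ j, j < i → g i ∉ P.M (f j) ∧ g i ≠ g j := by
    intro i
    induction i using Ordinal.induction with
    | h i IH =>
      intro hi
      set T : i.ToType × Bool → Set Ordinal := fun p =>
        bif p.2 then P.M (f (((Ordinal.ToType.mk (o := i)).symm p.1 : ↥(Set.Iio i)) : Ordinal))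
        else {g (((Ordinal.ToType.mk (o := i)).symm p.1 : ↥(Set.Iio i)) : Ordinal)} with hT
      have hTcard : #(i.ToType × Bool) < P.mu.ord.cof := by
        rw [hcof, Cardinal.mk_prod, Cardinal.mk_toType, Cardinal.mk_bool,
          Cardinal.lift_id, Cardinal.lift_two]
        exact Cardinal.mul_lt_of_lt hunc.le (Cardinal.lt_ord.1 hi)
          ((Cardinal.nat_lt_aleph0 2).trans_le hunc.le)
      have hTns : ∀ p, IsNonstationaryBelow (T p) P.mu.ord := by
        rintro ⟨j, b⟩
        have hjlt : (((Ordinal.ToType.mk (o := i)).symm j : ↥(Set.Iio i)) : Ordinal) < i :=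
          ((Ordinal.ToType.mk (o := i)).symm j).2
        cases b with
        | true => exact hNS _ (hf_lt _)
        | false =>
          have hgN : g (((Ordinal.ToType.mk (o := i)).symm j : ↥(Set.Iio i)) : Ordinal) ∈ N :=
            (IH _ hjlt (hjlt.trans hi)).1
          exact isNonstationaryBelow_of_bounded (hNsub hgN) holim
            (fun x hx => le_of_eq hx)
      have hstat := stationary_diff_iUnion hale hNst hTcard T hTns
      obtain ⟨x, hx, hxIio⟩ := hstat _ isClubBelow_Iio
      have hxS : x ∈ N \ {y | ∃ j, ∃ _ : j < i, y ∈ P.M (f j) ∨ y = g j} := by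
        refine ⟨hx.1, ?_⟩
        rintro ⟨j, hj, hcase⟩
        refine hx.2 (Set.mem_iUnion.2 ?_)
        rcases hcase with h1 | h2
        · refine ⟨((Ordinal.ToType.mk (o := i)) ⟨j, hj⟩, true), ?_⟩
          simpa [hT] using h1
        · refine ⟨((Ordinal.ToType.mk (o := i)) ⟨j, hj⟩, false), ?_⟩
          simpa [hT] using h2
      have hne : (N \ {y | ∃ j, ∃ _ : j < i, y ∈ P.M (f j) ∨ y = g j}).Nonempty := ⟨x, hxS⟩
      have hgi : g i ∈ N \ {y | ∃ j, ∃ _ : j < i, y ∈ P.M (f j) ∨ y = g j} := by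
        rw [geq i, dif_pos hne]
        exact hne.some_mem
      refine ⟨hgi.1, ?_⟩
      intro j hj
      constructor
      · intro hmem; exact hgi.2 ⟨j, hj, Or.inl hmem⟩
      · intro heq; exact hgi.2 ⟨j, hj, Or.inr heq⟩
  -- `N' = g '' Iio μ`
  set N' : Set Ordinal := g '' (Set.Iio P.mu.ord) with hN'
  have hN'inj : Set.InjOn g (Set.Iio P.mu.ord) := by
    intro i hi j hj hij
    by_contra hne
    rcases lt_or_gt_of_ne hne with h | h
    · exact ((key j hj).2 i h).2 hij.symm
    · exact ((key i hi).2 j h).2 hij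
  have hN'card : #N' = Cardinal.lift.{1} P.mu := by
    rw [hN', Cardinal.mk_image_eq_of_injOn _ _ hN'inj, Ordinal.mk_Iio_ordinal,
      Cardinal.card_ord]
  have hN'N : N' ⊆ N := by rintro _ ⟨i, hi, rfl⟩; exact (key i hi).1
  have hN'sub : N' ⊆ Set.Iio P.mu.ord := fun x hx => hNsub (hN'N hx)
  obtain ⟨φ, hφκ, hφcard⟩ := P.M_mad N' hN'sub hN'card
  refine ⟨φ, hφκ, ?_, ?_⟩
  · intro hφΨ
    obtain ⟨j₀, hj₀, hfj₀⟩ := hf_cover φ hφΨ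
    have hsub2 : (N' ∩ P.M φ : Set Ordinal) ⊆ g '' (Set.Iic j₀) := by
      rintro x ⟨⟨i, hi, rfl⟩, hxM⟩
      refine ⟨i, ?_, rfl⟩
      by_contra hgt
      rw [Set.mem_Iic, not_le] at hgt
      exact ((key i hi).2 j₀ hgt).1 (hfj₀ ▸ hxM)
    have hcard2 : #(↥(N' ∩ P.M φ)) < Cardinal.lift.{1} P.mu := by
      calc #(↥(N' ∩ P.M φ)) ≤ #(g '' (Set.Iic j₀)) := Cardinal.mk_le_mk_of_subset hsub2
      _ ≤ #(Set.Iic j₀) := Cardinal.mk_image_le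
      _ = #(Set.Iio (Order.succ j₀)) := by rw [Order.Iio_succ]
      _ = Cardinal.lift.{1} (Order.succ j₀).card := Ordinal.mk_Iio_ordinal _
      _ < Cardinal.lift.{1} P.mu := Cardinal.lift_lt.2 (Cardinal.lt_ord.1 (holim.succ_lt hj₀))
    rw [hφcard] at hcard2
    exact lt_irrefl _ hcard2
  · refine le_antisymm ?_ ?_
    · calc #(↥(N ∩ P.M φ)) ≤ #(P.M φ) := Cardinal.mk_le_mk_of_subset Set.inter_subset_right
      _ = Cardinal.lift.{1} P.mu := P.M_card φ hφκ
    · rw [← hφcard]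
      exact Cardinal.mk_le_mk_of_subset (Set.inter_subset_inter_left _ hN'N)


/-- If `λ = μ⁺` for `μ` uncountable regular, `C̄` guesses clubs in the sense of
Theorem (Shelah, successor-guessing) and `𝒜` is a nonstationary MAD family of size `μ⁺`,
then `X[μ⁺,μ,𝒜,C̄]` is high. -/
theorem stmt17 (P : Setup) (hunc : Cardinal.aleph0 < P.mu)
    (hlam : P.lam = Order.succ P.mu) (hkappa : P.kappa = Order.succ P.mu)
    (hNS : ∀ φ < P.kappa.ord, IsNonstationaryBelow (P.M φ) P.mu.ord)
    (hguess : ∀ E : Set Ordinal, IsClubBelow E P.lam.ord →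
      ∃ α ∈ Sset P.lam.ord P.mu,
        IsStationaryBelow {ξ | ξ < P.mu.ord ∧ P.a α (ξ + 1) ∈ E} P.mu.ord)
    (F : Set ↥P.Xset) (hF : IsClosed F) (hub : P.Unbounded F) :
    P.HighEnough F := by
  classical
  have hmual : ℵ₀ ≤ P.mu := P.mu_reg.aleph0_le
  have hlamreg : P.lam.IsRegular := hlam ▸ Cardinal.isRegular_succ hmual
  have hlamal : ℵ₀ ≤ P.lam := hlamreg.aleph0_le
  have hcoflam : P.lam.ord.cof = P.lam := hlamreg.cof_eq
  have halelam : ℵ₀ < P.lam.ord.cof := by rw [hcoflam]; exact hunc.trans_le (hlam ▸ (Order.le_succ P.mu))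
  have hlamlim : Order.IsSuccLimit P.lam.ord := Cardinal.isSuccLimit_ord hlamal
  have hmulim : Order.IsSuccLimit P.mu.ord := Cardinal.isSuccLimit_ord hmual
  have hkpos : (0:Ordinal) < P.kappa.ord := by
    rw [Cardinal.lt_ord, Ordinal.card_zero, hkappa]
    exact lt_of_le_of_lt zero_le (Order.lt_succ P.mu)
  have hkl : P.kappa = P.lam := by rw [hkappa, hlam]
  have hpisub : P.pi F ⊆ Set.Iio P.lam.ord := by
    rintro _ ⟨y, _, rfl⟩
    exact y.2.1
  -- the derived set of `π(F)`
  set D : Set Ordinal := {β | β < P.lam.ord ∧ 0 < β ∧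
    ∀ γ < β, ∃ δ ∈ P.pi F, γ < δ ∧ δ < β} with hD
  have hDclub : IsClubBelow D P.lam.ord := isClubBelow_derived halelam hpisub hub
  -- cardinality of `F`
  have hFcard : #F = Cardinal.lift.{1} P.lam := by
    refine le_antisymm ?_ ?_
    · have hXsub : P.Xset ⊆ (Set.Iio P.lam.ord) ×ˢ (Set.Iio P.kappa.ord) := by
        rintro ⟨p1, p2⟩ hp
        refine ⟨hp.1, ?_⟩
        rcases hp.2 with h | h
        · exact h.2
        · rw [h.2]; exact hkpos
      calc #F ≤ #(↥P.Xset) := Cardinal.mk_set_le F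
      _ ≤ #(↥((Set.Iio P.lam.ord) ×ˢ (Set.Iio P.kappa.ord))) := Cardinal.mk_le_mk_of_subset hXsub
      _ = #(↥(Set.Iio P.lam.ord) × ↥(Set.Iio P.kappa.ord)) :=
          Cardinal.mk_congr (Equiv.Set.prod _ _)
      _ = #(↥(Set.Iio P.lam.ord)) * #(↥(Set.Iio P.kappa.ord)) := by
          rw [Cardinal.mk_prod, Cardinal.lift_id, Cardinal.lift_id]
      _ = Cardinal.lift.{1} P.lam * Cardinal.lift.{1} P.lam := by
          rw [Ordinal.mk_Iio_ordinal, Ordinal.mk_Iio_ordinal, Cardinal.card_ord,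
            Cardinal.card_ord, hkl]
      _ = Cardinal.lift.{1} P.lam := Cardinal.mul_eq_self (by simpa using hlamal)
    · have hpiF : P.pi F = (fun y : ↥P.Xset => (y : Ordinal × Ordinal).1) '' F := by
        ext z
        simp [Setup.pi, Set.image]
      have h1 : Cardinal.lift.{1} P.lam ≤ #(P.pi F) := by
        have := cof_le_mk_of_unbounded hpisub (fun β hβ => by
          obtain ⟨γ, hγ, hγ'⟩ := hub β hβ; exact ⟨γ, hγ, hγ'.le⟩)
        rwa [hcoflam] at this
      calc Cardinal.lift.{1} P.lam ≤ #(P.pi F) := h1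
      _ ≤ #F := by rw [hpiF]; exact Cardinal.mk_image_le
  -- main step: for every `s < λ`, find a full column above `s`
  have main : ∀ s < P.lam.ord, ∃ α', s < α' ∧ α' < P.lam.ord ∧
      #(↥(F ∩ P.colS α')) = #F := by
    intro s hs
    have hs1 : Order.succ s < P.lam.ord := hlamlim.succ_lt hs
    set E : Set Ordinal := Set.Iio P.lam.ord ∩
      ⋂ b : Bool, (bif b then D else Set.Ico (Order.succ s) P.lam.ord) with hE
    have hEclub : IsClubBelow E P.lam.ord := by
      refine isClubBelow_iInter halelam ?_ _ ?_
      · rw [Cardinal.mk_bool]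
        exact lt_trans (by exact_mod_cast Cardinal.nat_lt_aleph0 2) halelam
      · rintro (_|_)
        · exact isClubBelow_Ico hs1
        · exact hDclub
    have hED : E ⊆ D := by
      intro z hz
      have := Set.mem_iInter.1 hz.2 true
      simpa using this
    have hEs : E ⊆ Set.Ico (Order.succ s) P.lam.ord := by
      intro z hz
      have := Set.mem_iInter.1 hz.2 false
      simpa using this
    obtain ⟨α, hα, hstat⟩ := hguess E hEclub
    set N : Set Ordinal := {ξ | ξ < P.mu.ord ∧ P.a α (ξ + 1) ∈ E} with hN
    have hNsub : N ⊆ Set.Iio P.mu.ord := fun ξ hξ => hξ.1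
    -- `α` is above `s`
    have hsα : s < α := by
      obtain ⟨ξ, hξ, _⟩ := hstat _ (isClubBelow_Iio (o := P.mu.ord))
      have h1 : Order.succ s ≤ P.a α (ξ + 1) := (hEs hξ.2).1
      have h2 : P.a α (ξ + 1) < α := P.a_lt α hα (ξ + 1)
        (by rw [Ordinal.add_one_eq_succ]; exact hmulim.succ_lt hξ.1)
      exact lt_of_lt_of_le (Order.lt_succ s) (h1.trans h2.le)
    -- the set of good colors
    set Φ : Set Ordinal := {ψ | ψ < P.kappa.ord ∧ #(↥(N ∩ P.M ψ)) = Cardinal.lift.{1} P.mu}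
      with hΦ
    have hΦbig : ¬ (#Φ ≤ Cardinal.lift.{1} P.mu) := by
      intro hle
      obtain ⟨φ, hφκ, hφn, hφcard⟩ := claim P hunc hNsub hstat hNS hkpos
        (fun ψ hψ => hψ.1) hle
      exact hφn ⟨hφκ, hφcard⟩
    -- each good color gives a point of `F` in column `α`
    have hinj : #Φ ≤ #(↥(F ∩ P.colS α)) := by
      have hmem : ∀ ψ : ↥Φ, (⟨(α, (ψ:Ordinal)), ⟨hα.1, Or.inl ⟨hα, ψ.2.1⟩⟩⟩ : ↥P.Xset) ∈
          F ∩ P.colS α := by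
        intro ψ
        refine ⟨?_, rfl⟩
        refine guessed_mem P hunc hlam F hF (E := E) ?_ hα ψ.2.1 ?_
        · intro β hβ γ hγ
          exact (hED hβ).2.2 γ hγ
        · intro c hc
          obtain ⟨ζ, hζ, hζc⟩ := unbounded_of_mk_eq (c := P.mu)
            (fun z hz => hNsub hz.1) (le_of_eq ψ.2.2.symm) c hc
          exact ⟨ζ, hζ.2, (hζ.1).1, (hζ.1).2, hζc⟩
      refine Cardinal.mk_le_of_injective (f := fun ψ : ↥Φ =>
        (⟨⟨(α, (ψ:Ordinal)), ⟨hα.1, Or.inl ⟨hα, ψ.2.1⟩⟩⟩, hmem ψ⟩ : ↥(F ∩ P.colS α))) ?_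
      intro ψ1 ψ2 h
      have := congrArg (fun z => (((z : ↥(F ∩ P.colS α)) : ↥P.Xset) : Ordinal × Ordinal).2) h
      exact Subtype.ext this
    have hcolcard : #(↥(F ∩ P.colS α)) = #F := by
      refine le_antisymm (Cardinal.mk_le_mk_of_subset Set.inter_subset_left) ?_
      rw [hFcard]
      have h1 : Order.succ (Cardinal.lift.{1} P.mu) ≤ #Φ := Order.succ_le_of_lt (not_le.1 hΦbig)
      have h2 : Cardinal.lift.{1} P.lam = Order.succ (Cardinal.lift.{1} P.mu) := by
        rw [hlam, Cardinal.lift_succ]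
      rw [h2]
      exact h1.trans hinj
    exact ⟨α, hsα, hα.1, hcolcard⟩
  -- conclude
  set A' : Set Ordinal := {α' | #(↥(F ∩ P.colS α')) = #F} ∩ Set.Iio P.lam.ord with hA'
  have hu' : ∀ β < P.lam.ord, ∃ γ ∈ A', β ≤ γ := by
    intro β hβ
    obtain ⟨α', h1, h2, h3⟩ := main β hβ
    exact ⟨α', ⟨h3, h2⟩, h1.le⟩
  have hcard' := cof_le_mk_of_unbounded (Set.inter_subset_right) hu'
  rw [hcoflam] at hcard'
  show Cardinal.lift.{1} P.mu ≤ #({α | #(↥(F ∩ P.colS α)) = #F} : Set Ordinal)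
  calc Cardinal.lift.{1} P.mu ≤ Cardinal.lift.{1} P.lam := Cardinal.lift_le.2 P.mu_lt_lam.le
  _ ≤ #A' := hcard'
  _ ≤ #({α | #(↥(F ∩ P.colS α)) = #F} : Set Ordinal) :=
      Cardinal.mk_le_mk_of_subset Set.inter_subset_left


end DSoukupPaper
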